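/- There exists a transport plan z for (G,u,v) achieving the minimum cost EMD_G(u,v) such that z(w,w) = 1/(deg_G(v)+1) for every vertex w ∈ {u,v} ∪ (N_G(u) ∩ N_G(v)); i.e., an optimal plan that ships an amount 1/(deg_G(v)+1) of mass from w to itself (at zero transportation cost) for w = u, for w = v, and for every common neighbor w of u and v. -/

import Mathlib

open Finset
open scoped Classical

variable {V : Type*}

/-- The open neighborhood of `u` in `G`, as a finset. -/
noncomputable def nbrF [Fintype V] (G : SimpleGraph V) (u : V) : Finset V :=
  Finset.univ.filter fun x => G.Adj u x

/-- The degree of `u` in `G`. -/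
noncomputable def degG [Fintype V] (G : SimpleGraph V) (u : V) : ℕ := (nbrF G u).card

/-- The closed neighborhood `N[u]` of `u` in `G`. -/
noncomputable def cnbr [Fintype V] (G : SimpleGraph V) (u : V) : Finset V :=
  insert u (nbrF G u)

/-- A transport plan for `(G,u,v)`: nonnegative, with row sums `1/(deg u + 1)` over
`N[u]` and column sums `1/(deg v + 1)` over `N[v]`. -/
def IsPlanG [Fintype V] (G : SimpleGraph V) (u v : V) (z : V → V → ℝ) : Prop :=
  (∀ x y, 0 ≤ z x y) ∧
  (∀ x ∈ cnbr G u, ∑ y ∈ cnbr G v, z x y = 1 / ((degG G u : ℝ) + 1)) ∧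
  (∀ y ∈ cnbr G v, ∑ x ∈ cnbr G u, z x y = 1 / ((degG G v : ℝ) + 1))

/-- The cost of a transport plan, with respect to shortest-path distance in `G`. -/
noncomputable def planCostG [Fintype V] (G : SimpleGraph V) (u v : V) (z : V → V → ℝ) : ℝ :=
  ∑ x ∈ cnbr G u, ∑ y ∈ cnbr G v, (G.dist x y : ℝ) * z x y

/-- The earth mover's distance `EMD_G(u,v)`: the minimum cost of a transport plan. -/
noncomputable def EMDG [Fintype V] (G : SimpleGraph V) (u v : V) : ℝ :=
  sInf {t | ∃ z, IsPlanG G u v z ∧ planCostG G u v z = t}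

/-- The Ollivier–Ricci curvature of the edge `{u,v}`. -/
noncomputable def RicG [Fintype V] (G : SimpleGraph V) (u v : V) : ℝ :=
  1 - EMDG G u v

section Aux
variable [Fintype V] {G : SimpleGraph V} {u v : V}

lemma mem_cnbr {w x : V} : x ∈ cnbr G w ↔ x = w ∨ G.Adj w x := by
  simp [cnbr, nbrF]

lemma self_mem_cnbr (w : V) : w ∈ cnbr G w := mem_cnbr.2 (Or.inl rfl)

lemma card_cnbr (w : V) : (cnbr G w).card = degG G w + 1 := by
  rw [cnbr, Finset.card_insert_of_notMem (by simp [nbrF])]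
  rfl

lemma reachable_of_mem_cnbr {w x : V} (h : x ∈ cnbr G w) : G.Reachable w x := by
  rcases mem_cnbr.1 h with h | h
  · exact h ▸ SimpleGraph.Reachable.refl _
  · exact h.reachable

omit [Fintype V] in
lemma dist_tri {x w y : V} (h1 : G.Reachable x w) (h2 : G.Reachable w y) :
    (G.dist x y : ℝ) ≤ (G.dist x w : ℝ) + (G.dist w y : ℝ) := by
  obtain ⟨p, hp⟩ := h1.exists_walk_length_eq_dist
  obtain ⟨q, hq⟩ := h2.exists_walk_length_eq_dist
  have := G.dist_le (p.append q)
  rw [SimpleGraph.Walk.length_append, hp, hq] at this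
  exact_mod_cast this

/-- a trivial product plan, supported on `cnbr u × cnbr v`. -/
lemma exists_plan (G : SimpleGraph V) (u v : V) :
    ∃ z, IsPlanG G u v z ∧ ∀ x y, ¬(x ∈ cnbr G u ∧ y ∈ cnbr G v) → z x y = 0 := by
  refine ⟨fun x y => if x ∈ cnbr G u ∧ y ∈ cnbr G v then
      (1 / ((degG G u : ℝ) + 1)) * (1 / ((degG G v : ℝ) + 1)) else 0, ⟨?_, ?_, ?_⟩, ?_⟩
  · intro x y
    simp only []
    split <;> positivity
  · intro x hx
    rw [Finset.sum_congr rfl (fun y hy => if_pos ⟨hx, hy⟩), Finset.sum_const, card_cnbr,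
      nsmul_eq_mul]
    have : ((degG G v : ℝ) + 1) ≠ 0 := by positivity
    push_cast
    field_simp
  · intro y hy
    rw [Finset.sum_congr rfl (fun x hx => if_pos ⟨hx, hy⟩), Finset.sum_const, card_cnbr,
      nsmul_eq_mul]
    have : ((degG G u : ℝ) + 1) ≠ 0 := by positivity
    push_cast
    field_simp
  · intro x y h
    exact if_neg h

lemma cost_nonneg {z : V → V → ℝ} (hz : IsPlanG G u v z) : 0 ≤ planCostG G u v z := by
  apply Finset.sum_nonneg
  intro x _
  apply Finset.sum_nonneg
  intro y _
  have := hz.1 x y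
  positivity

end Aux

section Attain
variable [Fintype V] (G : SimpleGraph V) (u v : V)

lemma trunc_plan {z : V → V → ℝ} (hz : IsPlanG G u v z) :
    IsPlanG G u v (fun x y => if x ∈ cnbr G u ∧ y ∈ cnbr G v then z x y else 0) ∧
    planCostG G u v (fun x y => if x ∈ cnbr G u ∧ y ∈ cnbr G v then z x y else 0)
      = planCostG G u v z := by
  obtain ⟨h0, hr, hc⟩ := hz
  refine ⟨⟨?_, ?_, ?_⟩, ?_⟩
  · intro x y; simp only []; split
    · exact h0 x y
    · exact le_refl 0
  · intro x hx
    rw [Finset.sum_congr rfl fun y hy => if_pos ⟨hx, hy⟩]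
    exact hr x hx
  · intro y hy
    rw [Finset.sum_congr rfl fun x hx => if_pos ⟨hx, hy⟩]
    exact hc y hy
  · unfold planCostG
    refine Finset.sum_congr rfl fun x hx => Finset.sum_congr rfl fun y hy => ?_
    simp only []
    rw [if_pos ⟨hx, hy⟩]

lemma exists_optimal : ∃ z, IsPlanG G u v z ∧ planCostG G u v z = EMDG G u v := by
  classical
  set A : Set (V → V → ℝ) :=
    {z | IsPlanG G u v z ∧ ∀ x y, ¬(x ∈ cnbr G u ∧ y ∈ cnbr G v) → z x y = 0} with hAdef
  have hAne : A.Nonempty := by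
    obtain ⟨z, hz, hz0⟩ := exists_plan G u v
    exact ⟨z, hz, fun x y h => hz0 x y h⟩
  have hsub : A ⊆ Set.pi Set.univ fun _ => Set.pi Set.univ fun _ => Set.Icc (0:ℝ) 1 := by
    intro z hz
    intro x _
    intro y _
    refine ⟨hz.1.1 x y, ?_⟩
    by_cases h : x ∈ cnbr G u ∧ y ∈ cnbr G v
    · have hle : z x y ≤ ∑ x' ∈ cnbr G u, z x' y :=
        Finset.single_le_sum (fun x' _ => hz.1.1 x' y) h.1
      rw [hz.1.2.2 y h.2] at hle
      refine hle.trans ?_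
      rw [div_le_one (by positivity)]
      have : (0:ℝ) ≤ (degG G v : ℝ) := Nat.cast_nonneg _
      linarith
    · rw [hz.2 x y h]; exact zero_le_one
  have hBc : IsCompact (Set.pi Set.univ fun _ : V => Set.pi Set.univ fun _ : V => Set.Icc (0:ℝ) 1) :=
    isCompact_univ_pi fun _ => isCompact_univ_pi fun _ => isCompact_Icc
  have hrowcont : ∀ x : V, Continuous fun z : V → V → ℝ => ∑ y ∈ cnbr G v, z x y :=
    fun x => continuous_finset_sum _ fun y _ => (continuous_apply y).comp (continuous_apply x)
  have hcolcont : ∀ y : V, Continuous fun z : V → V → ℝ => ∑ x ∈ cnbr G u, z x y :=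
    fun y => continuous_finset_sum _ fun x _ => (continuous_apply y).comp (continuous_apply x)
  have hevalcont : ∀ x y : V, Continuous fun z : V → V → ℝ => z x y :=
    fun x y => (continuous_apply y).comp (continuous_apply x)
  have hAcl : IsClosed A := by
    have e1 : IsClosed {z : V → V → ℝ | ∀ x y, 0 ≤ z x y} := by
      rw [Set.setOf_forall]
      refine isClosed_iInter fun x => ?_
      rw [Set.setOf_forall]
      exact isClosed_iInter fun y => isClosed_le continuous_const (hevalcont x y)
    have e2 : IsClosed {z : V → V → ℝ |
        ∀ x ∈ cnbr G u, ∑ y ∈ cnbr G v, z x y = 1 / ((degG G u : ℝ) + 1)} := by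
      rw [Set.setOf_forall]
      refine isClosed_iInter fun x => ?_
      by_cases hx : x ∈ cnbr G u
      · simp only [hx, forall_true_left]
        exact isClosed_eq (hrowcont x) continuous_const
      · simp only [hx]
        simp
    have e3 : IsClosed {z : V → V → ℝ |
        ∀ y ∈ cnbr G v, ∑ x ∈ cnbr G u, z x y = 1 / ((degG G v : ℝ) + 1)} := by
      rw [Set.setOf_forall]
      refine isClosed_iInter fun y => ?_
      by_cases hy : y ∈ cnbr G v
      · simp only [hy, forall_true_left]
        exact isClosed_eq (hcolcont y) continuous_const
      · simp only [hy]
        simp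
    have e4 : IsClosed {z : V → V → ℝ |
        ∀ x y, ¬(x ∈ cnbr G u ∧ y ∈ cnbr G v) → z x y = 0} := by
      rw [Set.setOf_forall]
      refine isClosed_iInter fun x => ?_
      rw [Set.setOf_forall]
      refine isClosed_iInter fun y => ?_
      by_cases h : x ∈ cnbr G u ∧ y ∈ cnbr G v
      · simp [h]
      · simp only [h, not_false_iff, forall_true_left]
        exact isClosed_eq (hevalcont x y) continuous_const
    have : A = ({z : V → V → ℝ | ∀ x y, 0 ≤ z x y} ∩
        {z | ∀ x ∈ cnbr G u, ∑ y ∈ cnbr G v, z x y = 1 / ((degG G u : ℝ) + 1)}) ∩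
        ({z | ∀ y ∈ cnbr G v, ∑ x ∈ cnbr G u, z x y = 1 / ((degG G v : ℝ) + 1)} ∩
        {z | ∀ x y, ¬(x ∈ cnbr G u ∧ y ∈ cnbr G v) → z x y = 0}) := by
      ext z
      simp only [hAdef, Set.mem_setOf_eq, Set.mem_inter_iff, IsPlanG]
      tauto
    rw [this]
    exact ((e1.inter e2).inter (e3.inter e4))
  have hAcomp : IsCompact A := hBc.of_isClosed_subset hAcl hsub
  have hcostcont : Continuous (planCostG G u v) := by
    unfold planCostG
    exact continuous_finset_sum _ fun x _ => continuous_finset_sum _ fun y _ =>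
      continuous_const.mul (hevalcont x y)
  obtain ⟨z0, hz0A, hmin⟩ := hAcomp.exists_isMinOn hAne hcostcont.continuousOn
  refine ⟨z0, hz0A.1, ?_⟩
  have hTne : {t | ∃ z, IsPlanG G u v z ∧ planCostG G u v z = t}.Nonempty :=
    ⟨planCostG G u v z0, z0, hz0A.1, rfl⟩
  have hbdd : BddBelow {t | ∃ z, IsPlanG G u v z ∧ planCostG G u v z = t} := by
    refine ⟨0, fun t ht => ?_⟩
    obtain ⟨z, hz, hzt⟩ := ht
    exact hzt ▸ cost_nonneg hz
  refine le_antisymm ?_ (csInf_le hbdd ⟨z0, hz0A.1, rfl⟩)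
  refine le_csInf hTne fun t ht => ?_
  obtain ⟨z, hz, rfl⟩ := ht
  obtain ⟨hz', hc'⟩ := trunc_plan G u v hz
  calc planCostG G u v z0 ≤ planCostG G u v
        (fun x y => if x ∈ cnbr G u ∧ y ∈ cnbr G v then z x y else 0) := by
        refine hmin ?_
        exact ⟨hz', fun x y h => if_neg h⟩
    _ = planCostG G u v z := hc'

end Attain
section Fix
variable [Fintype V] {G : SimpleGraph V} {u v : V}

lemma fix_one (hdeg : degG G u ≤ degG G v) {w : V}
    (hwu : w ∈ cnbr G u) (hwv : w ∈ cnbr G v) {z : V → V → ℝ} (hz : IsPlanG G u v z) :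
    ∃ z', IsPlanG G u v z' ∧ planCostG G u v z' ≤ planCostG G u v z ∧
      z' w w = 1 / ((degG G v : ℝ) + 1) ∧
      ∀ w' ∈ cnbr G u, w' ∈ cnbr G v → z w' w' = 1 / ((degG G v : ℝ) + 1) →
        z' w' w' = 1 / ((degG G v : ℝ) + 1) := by
  classical
  obtain ⟨h0, hrow, hcol⟩ := hz
  set a : ℝ := 1 / ((degG G u : ℝ) + 1) with ha
  set c : ℝ := 1 / ((degG G v : ℝ) + 1) with hcdef
  have ha0 : 0 < a := by positivity
  have hc0 : 0 < c := by positivity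
  have hca : c ≤ a := by
    apply one_div_le_one_div_of_le (by positivity)
    have : (degG G u : ℝ) ≤ (degG G v : ℝ) := by exact_mod_cast hdeg
    linarith
  set s : ℝ := z w w with hsdef
  have hsc : s ≤ c := by
    have hle : z w w ≤ ∑ x ∈ cnbr G u, z x w :=
      Finset.single_le_sum (fun x _ => h0 x w) hwu
    rw [hcol w hwv] at hle
    exact hle
  rcases eq_or_lt_of_le hsc with hs | hs
  · exact ⟨z, ⟨h0, hrow, hcol⟩, le_refl _, hs, fun w' _ _ h => h⟩
  have hr0 : 0 < a - s := by linarith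
  have hrne : a - s ≠ 0 := ne_of_gt hr0
  set r : ℝ := a - s with hrdef
  set z' : V → V → ℝ := fun x y =>
    if x = w then (if y = w then c else z w y * ((a - c) / r))
    else if y = w then 0 else z x y + z x w * z w y / r with hz'def
  -- pointwise descriptions
  have hz'ww : z' w w = c := by simp [hz'def]
  have hz'wy : ∀ y, y ≠ w → z' w y = z w y * ((a - c) / r) := by
    intro y hy; simp [hz'def, hy]
  have hz'xw : ∀ x, x ≠ w → z' x w = 0 := by
    intro x hx; simp [hz'def, hx]
  have hz'xy : ∀ x y, x ≠ w → y ≠ w → z' x y = z x y + z x w * z w y / r := by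
    intro x y hx hy; simp [hz'def, hx, hy]
  -- erase sums
  have hrow_erase : ∀ x ∈ cnbr G u, ∑ y ∈ (cnbr G v).erase w, z x y = a - z x w := by
    intro x hx
    have h1 := Finset.add_sum_erase (cnbr G v) (z x) hwv
    rw [hrow x hx] at h1
    linarith
  have hcol_erase : ∀ y ∈ cnbr G v, ∑ x ∈ (cnbr G u).erase w, z x y = c - z w y := by
    intro y hy
    have h1 := Finset.add_sum_erase (cnbr G u) (fun x => z x y) hwu
    rw [hcol y hy] at h1
    linarith
  have hplan' : IsPlanG G u v z' := by
    refine ⟨?_, ?_, ?_⟩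
    · intro x y
      by_cases hx : x = w
      · by_cases hy : y = w
        · rw [hx, hy, hz'ww]; exact hc0.le
        · rw [hx, hz'wy y hy]
          have := h0 w y
          have h1 : (0:ℝ) ≤ (a - c) / r := div_nonneg (by linarith) hr0.le
          positivity
      · by_cases hy : y = w
        · rw [hy, hz'xw x hx]
        · rw [hz'xy x y hx hy]
          have h1 := h0 x y
          have h2 := h0 x w
          have h3 := h0 w y
          positivity
    · intro x hx
      by_cases hxw : x = w
      · rw [hxw, ← Finset.add_sum_erase _ _ hwv, hz'ww,
          Finset.sum_congr rfl (fun y hy => hz'wy y (Finset.ne_of_mem_erase hy)),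
          ← Finset.sum_mul, hrow_erase w hwu]
        rw [← hsdef, mul_comm, div_mul_cancel₀ _ hrne]
        linarith
      · rw [← Finset.add_sum_erase _ _ hwv, hz'xw x hxw,
          Finset.sum_congr rfl (fun y hy => hz'xy x y hxw (Finset.ne_of_mem_erase hy))]
        rw [Finset.sum_add_distrib]
        have e1 : ∑ y ∈ (cnbr G v).erase w, z x w * z w y / r
            = z x w * ((a - s) / r) := by
          rw [← Finset.sum_div, ← Finset.mul_sum, hrow_erase w hwu, ← hsdef, mul_div_assoc]
        rw [e1, hrow_erase x hx, div_self hrne]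
        ring
    · intro y hy
      by_cases hyw : y = w
      · rw [hyw, ← Finset.add_sum_erase _ _ hwu, hz'ww,
          Finset.sum_congr rfl (fun x hx => hz'xw x (Finset.ne_of_mem_erase hx))]
        rw [Finset.sum_const_zero, add_zero]
      · rw [← Finset.add_sum_erase _ _ hwu, hz'wy y hyw,
          Finset.sum_congr rfl (fun x hx => hz'xy x y (Finset.ne_of_mem_erase hx) hyw)]
        rw [Finset.sum_add_distrib]
        have e1 : ∑ x ∈ (cnbr G u).erase w, z x w * z w y / r
            = z w y * ((c - s) / r) := by
          rw [← Finset.sum_div]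
          rw [show (∑ x ∈ (cnbr G u).erase w, z x w * z w y)
              = (∑ x ∈ (cnbr G u).erase w, z x w) * z w y by rw [Finset.sum_mul]]
          rw [hcol_erase w hwv, ← hsdef]
          ring
        rw [e1, hcol_erase y hy]
        have e : (a - c) / r + (c - s) / r = 1 := by
          rw [← add_div, show a - c + (c - s) = a - s by ring, ← hrdef]
          exact div_self hrne
        have e2 : z w y * ((a - c) / r) + z w y * ((c - s) / r) = z w y := by
          rw [← mul_add, e, mul_one]
        linarith
  refine ⟨z', hplan', ?_, hz'ww, ?_⟩
  · -- cost inequality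
    have hdww : ((G.dist w w : ℕ) : ℝ) = 0 := by simp
    have htri : ∀ x ∈ cnbr G u, ∀ y ∈ cnbr G v,
        ((G.dist x y : ℕ) : ℝ) ≤ (G.dist x w : ℝ) + (G.dist w y : ℝ) := by
      intro x hx y hy
      exact dist_tri ((reachable_of_mem_cnbr hx).symm.trans (reachable_of_mem_cnbr hwu))
        ((reachable_of_mem_cnbr hwv).symm.trans (reachable_of_mem_cnbr hy))
    set Dx : ℝ := ∑ x ∈ (cnbr G u).erase w, (G.dist x w : ℝ) * z x w with hDx
    set Dy : ℝ := ∑ y ∈ (cnbr G v).erase w, (G.dist w y : ℝ) * z w y with hDy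
    set C0 : ℝ := ∑ x ∈ (cnbr G u).erase w, ∑ y ∈ (cnbr G v).erase w,
      (G.dist x y : ℝ) * z x y with hC0
    have hcost_z : planCostG G u v z = Dy + (Dx + C0) := by
      rw [planCostG, ← Finset.add_sum_erase _ _ hwu]
      congr 1
      · rw [← Finset.add_sum_erase _ _ hwv, hdww, zero_mul, zero_add]
      · rw [hDx, hC0, ← Finset.sum_add_distrib]
        refine Finset.sum_congr rfl fun x hx => ?_
        rw [← Finset.add_sum_erase _ _ hwv]
    have hcost_z' : planCostG G u v z' = Dy * ((a - c) / r) +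
        (C0 + ∑ x ∈ (cnbr G u).erase w, ∑ y ∈ (cnbr G v).erase w,
          (G.dist x y : ℝ) * (z x w * z w y / r)) := by
      rw [planCostG, ← Finset.add_sum_erase _ _ hwu]
      congr 1
      · have hsum : (∑ y ∈ (cnbr G v).erase w, (G.dist w y : ℝ) * z' w y)
            = ∑ y ∈ (cnbr G v).erase w, (G.dist w y : ℝ) * (z w y * ((a - c) / r)) :=
          Finset.sum_congr rfl fun y hy => by rw [hz'wy y (Finset.ne_of_mem_erase hy)]
        rw [← Finset.add_sum_erase _ _ hwv, hz'ww, hdww, zero_mul, zero_add, hsum,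
          hDy, Finset.sum_mul]
        exact Finset.sum_congr rfl fun y _ => by ring
      · rw [hC0, ← Finset.sum_add_distrib]
        refine Finset.sum_congr rfl fun x hx => ?_
        have hxw := Finset.ne_of_mem_erase hx
        have hsum : (∑ y ∈ (cnbr G v).erase w, (G.dist x y : ℝ) * z' x y)
            = ∑ y ∈ (cnbr G v).erase w,
              (G.dist x y : ℝ) * (z x y + z x w * z w y / r) :=
          Finset.sum_congr rfl fun y hy => by
            rw [hz'xy x y hxw (Finset.ne_of_mem_erase hy)]
        rw [← Finset.add_sum_erase _ _ hwv, hz'xw x hxw, mul_zero, zero_add, hsum,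
          ← Finset.sum_add_distrib]
        exact Finset.sum_congr rfl fun y _ => by ring
    have hC1 : (∑ x ∈ (cnbr G u).erase w, ∑ y ∈ (cnbr G v).erase w,
        (G.dist x y : ℝ) * (z x w * z w y / r))
        ≤ Dx + Dy * ((c - s) / r) := by
      have step1 : (∑ x ∈ (cnbr G u).erase w, ∑ y ∈ (cnbr G v).erase w,
          (G.dist x y : ℝ) * (z x w * z w y / r))
          ≤ ∑ x ∈ (cnbr G u).erase w, ∑ y ∈ (cnbr G v).erase w,
            ((G.dist x w : ℝ) + (G.dist w y : ℝ)) * (z x w * z w y / r) := by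
        refine Finset.sum_le_sum fun x hx => Finset.sum_le_sum fun y hy => ?_
        refine mul_le_mul_of_nonneg_right
          (htri x (Finset.mem_of_mem_erase hx) y (Finset.mem_of_mem_erase hy)) ?_
        have h1 := h0 x w
        have h2 := h0 w y
        positivity
      refine step1.trans ?_
      have step2 : ∀ x ∈ (cnbr G u).erase w,
          (∑ y ∈ (cnbr G v).erase w,
            ((G.dist x w : ℝ) + (G.dist w y : ℝ)) * (z x w * z w y / r))
          = (G.dist x w : ℝ) * z x w + z x w * (Dy / r) := by
        intro x hx
        rw [show (∑ y ∈ (cnbr G v).erase w,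
            ((G.dist x w : ℝ) + (G.dist w y : ℝ)) * (z x w * z w y / r))
            = (∑ y ∈ (cnbr G v).erase w, ((G.dist x w : ℝ) * z x w / r) * z w y)
              + ∑ y ∈ (cnbr G v).erase w, (z x w / r) * ((G.dist w y : ℝ) * z w y) by
          rw [← Finset.sum_add_distrib]
          exact Finset.sum_congr rfl fun y _ => by ring,
          ← Finset.mul_sum, ← Finset.mul_sum, hrow_erase w hwu, ← hsdef, ← hDy,
          ← hrdef, div_mul_cancel₀ _ hrne]
        ring
      rw [Finset.sum_congr rfl step2, Finset.sum_add_distrib, ← hDx, ← Finset.sum_mul,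
        hcol_erase w hwv, ← hsdef]
      have e3 : (c - s) * (Dy / r) = Dy * ((c - s) / r) := by ring
      rw [e3]
    rw [hcost_z, hcost_z']
    have key : Dy * ((a - c) / r) + Dy * ((c - s) / r) = Dy := by
      rw [← mul_add, ← add_div, show a - c + (c - s) = a - s by ring,
        ← hrdef, div_self hrne, mul_one]
    linarith
  · -- preservation
    intro w' hw'u hw'v hdiag
    by_cases hww' : w' = w
    · rw [hww']; exact hz'ww
    have hzww' : z w w' = 0 := by
      have h2 : ∀ x ∈ (cnbr G u).erase w', 0 ≤ z x w' := fun x _ => h0 x w'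
      have h3 : ∑ x ∈ (cnbr G u).erase w', z x w' = 0 := by
        have h4 := Finset.add_sum_erase (cnbr G u) (fun x => z x w') hw'u
        rw [hcol w' hw'v, hdiag] at h4
        linarith
      exact (Finset.sum_eq_zero_iff_of_nonneg h2).1 h3 w
        (Finset.mem_erase.2 ⟨fun h => hww' h.symm, hwu⟩)
    rw [hz'xy w' w' hww' hww', hzww', hdiag]
    ring

lemma fix_all (hdeg : degG G u ≤ degG G v) (S : Finset V)
    (hS : ∀ w ∈ S, w ∈ cnbr G u ∧ w ∈ cnbr G v) {z : V → V → ℝ} (hz : IsPlanG G u v z) :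
    ∃ z', IsPlanG G u v z' ∧ planCostG G u v z' ≤ planCostG G u v z ∧
      ∀ w ∈ S, z' w w = 1 / ((degG G v : ℝ) + 1) := by
  classical
  induction S using Finset.induction_on with
  | empty => exact ⟨z, hz, le_refl _, by simp⟩
  | @insert w S hwS ih =>
    obtain ⟨z1, hz1, hc1, hd1⟩ := ih fun x hx => hS x (Finset.mem_insert_of_mem hx)
    have hw := hS w (Finset.mem_insert_self w S)
    obtain ⟨z2, hz2, hc2, hww, hpres⟩ := fix_one hdeg hw.1 hw.2 hz1
    refine ⟨z2, hz2, hc2.trans hc1, ?_⟩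
    intro w' hw'
    rcases Finset.mem_insert.1 hw' with h | h
    · rw [h]; exact hww
    · have hw'' := hS w' (Finset.mem_insert_of_mem h)
      exact hpres w' hw''.1 hw''.2 (hd1 w' h)

end Fix


/-- there is an optimal transport plan shipping mass `1/(deg_G(v)+1)` from
`w` to itself for `w = u`, `w = v`, and every common neighbor `w` of `u` and `v`. -/
theorem stmt5 [Fintype V] (G : SimpleGraph V) (u v : V) (huv : G.Adj u v)
    (hdeg : degG G u ≤ degG G v) :
    ∃ z : V → V → ℝ,
      IsPlanG G u v z ∧
      planCostG G u v z = EMDG G u v ∧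
      z u u = 1 / ((degG G v : ℝ) + 1) ∧
      z v v = 1 / ((degG G v : ℝ) + 1) ∧
      ∀ w : V, G.Adj u w → G.Adj v w → z w w = 1 / ((degG G v : ℝ) + 1) := by
  classical
  obtain ⟨z0, hz0, hcost0⟩ := exists_optimal G u v
  set S : Finset V := insert u (insert v (nbrF G u ∩ nbrF G v)) with hSdef
  have hS : ∀ w ∈ S, w ∈ cnbr G u ∧ w ∈ cnbr G v := by
    intro w hw
    rw [hSdef, Finset.mem_insert, Finset.mem_insert, Finset.mem_inter] at hw
    rcases hw with rfl | rfl | ⟨h1, h2⟩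
    · exact ⟨self_mem_cnbr w, mem_cnbr.2 (Or.inr huv.symm)⟩
    · exact ⟨mem_cnbr.2 (Or.inr huv), self_mem_cnbr w⟩
    · simp only [nbrF, Finset.mem_filter] at h1 h2
      exact ⟨mem_cnbr.2 (Or.inr h1.2), mem_cnbr.2 (Or.inr h2.2)⟩
  obtain ⟨z', hz', hc', hdiag⟩ := fix_all hdeg S hS hz0
  have hbdd : BddBelow {t | ∃ z, IsPlanG G u v z ∧ planCostG G u v z = t} := by
    refine ⟨0, fun t ht => ?_⟩
    obtain ⟨z, hz, hzt⟩ := ht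
    exact hzt ▸ cost_nonneg hz
  have heq : planCostG G u v z' = EMDG G u v := by
    refine le_antisymm (hc'.trans_eq hcost0) (csInf_le hbdd ⟨z', hz', rfl⟩)
  refine ⟨z', hz', heq, hdiag u (Finset.mem_insert_self _ _),
    hdiag v (Finset.mem_insert_of_mem (Finset.mem_insert_self _ _)), ?_⟩
  intro w hu hv
  refine hdiag w (Finset.mem_insert_of_mem (Finset.mem_insert_of_mem
    (Finset.mem_inter.2 ⟨?_, ?_⟩)))
  · simp [nbrF, hu]
  · simp [nbrF, hv]
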